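/- Fix τ ∈ ℍ with E6(τ) ≠ 0 and regard C₁ = −12·Δ·K/E6, C₂ = E4²·Δ·K²/(4E6²) − E6·L/24 + E4·M/24, D₂ = −E4·Δ·K²/(24E6) − E4²·L/288 + E6·M/288, D₃ = 2Δ²·K³/E6² + E4·Δ·K·L/(4E6) + Δ·N/4 as elements of the polynomial ring ℂ[K,L,M,N] in four formal variables K, L, M, N (with Δ = Δ(τ), E4 = E4(τ), E6 = E6(τ)). Then the determinant of the 4×4 Jacobian matrix whose (i,j) entry is the formal partial derivative of the i-th polynomial among (C₁,C₂,D₂,D₃) with respect to the j-th variable among (K,L,M,N) is the constant polynomial −3·Δ(τ)³/(4·E6(τ)). -/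

import Mathlib

open MvPolynomial Complex
set_option maxHeartbeats 1600000

/-- `q = e^{2πiτ}` -/
noncomputable def qc (τ : ℂ) : ℂ := Complex.exp (2 * Real.pi * Complex.I * τ)

/-- `E4(τ) = 1 + 240·Σ_{n≥1} n³qⁿ/(1−qⁿ)` -/
noncomputable def E4 (τ : ℂ) : ℂ :=
  1 + 240 * ∑' n : ℕ, ((n : ℂ) + 1) ^ 3 * qc τ ^ (n + 1) / (1 - qc τ ^ (n + 1))

/-- `E6(τ) = 1 − 504·Σ_{n≥1} n⁵qⁿ/(1−qⁿ)` -/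
noncomputable def E6 (τ : ℂ) : ℂ :=
  1 - 504 * ∑' n : ℕ, ((n : ℂ) + 1) ^ 5 * qc τ ^ (n + 1) / (1 - qc τ ^ (n + 1))

/-- `Δ = (E4³ − E6²)/1728` -/
noncomputable def Δf (τ : ℂ) : ℂ := (E4 τ ^ 3 - E6 τ ^ 2) / 1728

/-- `C₁ = −12·Δ·K/E6` in `ℂ[K,L,M,N]`, variables `X 0 = K, X 1 = L, X 2 = M, X 3 = N`. -/
noncomputable def C1p (τ : ℂ) : MvPolynomial (Fin 4) ℂ := C (-12 * Δf τ / E6 τ) * X 0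

/-- `C₂ = E4²·Δ·K²/(4E6²) − E6·L/24 + E4·M/24` -/
noncomputable def C2p (τ : ℂ) : MvPolynomial (Fin 4) ℂ :=
  C (E4 τ ^ 2 * Δf τ / (4 * E6 τ ^ 2)) * X 0 ^ 2 - C (E6 τ / 24) * X 1 + C (E4 τ / 24) * X 2

/-- `D₂ = −E4·Δ·K²/(24E6) − E4²·L/288 + E6·M/288` -/
noncomputable def D2p (τ : ℂ) : MvPolynomial (Fin 4) ℂ :=
  -(C (E4 τ * Δf τ / (24 * E6 τ))) * X 0 ^ 2 - C (E4 τ ^ 2 / 288) * X 1 + C (E6 τ / 288) * X 2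

/-- `D₃ = 2Δ²·K³/E6² + E4·Δ·K·L/(4E6) + Δ·N/4` -/
noncomputable def D3p (τ : ℂ) : MvPolynomial (Fin 4) ℂ :=
  C (2 * Δf τ ^ 2 / E6 τ ^ 2) * X 0 ^ 3 + C (E4 τ * Δf τ / (4 * E6 τ)) * (X 0 * X 1) +
    C (Δf τ / 4) * X 3

/-- The formal Jacobian determinant of `(C₁,C₂,D₂,D₃)` w.r.t. `(K,L,M,N)` is the constant
polynomial `−3·Δ(τ)³/(4·E6(τ))`. -/
theorem stmt_9 (τ : ℂ) (hτ : 0 < τ.im) (hE6 : E6 τ ≠ 0) :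
    (Matrix.of fun i j : Fin 4 => MvPolynomial.pderiv j (![C1p τ, C2p τ, D2p τ, D3p τ] i)).det
      = C (-3 * Δf τ ^ 3 / (4 * E6 τ)) := by
  have hΔ : (1728:ℂ) * Δf τ = E4 τ ^ 3 - E6 τ ^ 2 := by
    rw [Δf]; field_simp
  have hM : (Matrix.of fun i j : Fin 4 => MvPolynomial.pderiv j (![C1p τ, C2p τ, D2p τ, D3p τ] i))
      = !![C (-12 * Δf τ / E6 τ), 0, 0, 0;
           C (E4 τ ^ 2 * Δf τ / (4 * E6 τ ^ 2)) * (2 * X 0), C (-(E6 τ / 24)), C (E4 τ / 24), 0;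
           -(C (E4 τ * Δf τ / (24 * E6 τ)) * (2 * X 0)), C (-(E4 τ ^ 2 / 288)), C (E6 τ / 288), 0;
           C (2 * Δf τ ^ 2 / E6 τ ^ 2) * (3 * X 0 ^ 2) + C (E4 τ * Δf τ / (4 * E6 τ)) * X 1,
             C (E4 τ * Δf τ / (4 * E6 τ)) * X 0, 0, C (Δf τ / 4)] := by
    ext i j
    fin_cases i <;> fin_cases j <;>
      simp [C1p, C2p, D2p, D3p, pderiv_X, Derivation.leibniz, Derivation.leibniz_pow] <;> ring
  rw [hM]
  simp [Matrix.det_succ_row_zero, Fin.sum_univ_succ, Matrix.submatrix_apply, Fin.succAbove]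
  rw [← map_mul, ← map_mul, ← map_mul, ← map_mul, ← map_neg, ← map_add, ← map_mul]
  congr 1
  field_simp
  linear_combination (12 * Δf τ ^ 2) * hΔ
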